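/- For every k ≥ 0, the local trace space M^t(F) := P_k(F)² + ∇ P̃_{k+2}(F) is contained in [P_{k+1}(F)]², and its dimension equals dim [P_k(F)]² + (k+3), i.e. the sum P_k(F)² + ∇ P̃_{k+2}(F) is direct. -/

import Mathlib

open MvPolynomial

/-- The gradient, as a linear map from scalar polynomials in two variables to
vector-valued polynomials. -/
noncomputable def grad2 : MvPolynomial (Fin 2) ℝ →ₗ[ℝ] (Fin 2 → MvPolynomial (Fin 2) ℝ) :=
  LinearMap.pi fun i => (pderiv (R := ℝ) i).toLinearMap

/-- `[P_k(F)]²`: vector polynomials in two variables with components of total degree ≤ k. -/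
noncomputable def vecPk2 (k : ℕ) : Submodule ℝ (Fin 2 → MvPolynomial (Fin 2) ℝ) :=
  Submodule.pi Set.univ fun _ => restrictTotalDegree (Fin 2) ℝ k

/-- `∇ P̃_{k+2}(F)`: gradients of homogeneous polynomials of degree `k+2` in two variables. -/
noncomputable def gradHom2 (k : ℕ) : Submodule ℝ (Fin 2 → MvPolynomial (Fin 2) ℝ) :=
  Submodule.map grad2 (homogeneousSubmodule (Fin 2) ℝ (k + 2))

lemma coeff_pderiv' (i : Fin 2) (m : Fin 2 →₀ ℕ) (f : MvPolynomial (Fin 2) ℝ) :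
    coeff m (pderiv i f) = (m i + 1 : ℝ) * coeff (m + Finsupp.single i 1) f := by
  induction f using MvPolynomial.induction_on' with
  | add p q hp hq => simp [hp, hq, mul_add]
  | monomial s a =>
    rw [pderiv_monomial, coeff_monomial, coeff_monomial]
    by_cases h : s i = 0
    · have h1 : s - Finsupp.single i 1 = s := by
        ext j
        rw [Finsupp.tsub_apply, Finsupp.single_apply]
        split_ifs with hj
        · subst hj; omega
        · simp
      have h2 : s ≠ m + Finsupp.single i 1 := fun he => by
        apply absurd h; rw [he]; simp
      rw [h1, h, if_neg h2]
      simp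
    · have hle : Finsupp.single i 1 ≤ s := by
        rw [Finsupp.single_le_iff]; omega
      have h1 : s - Finsupp.single i 1 = m ↔ s = m + Finsupp.single i 1 :=
        tsub_eq_iff_eq_add_of_le hle
      by_cases h2 : s - Finsupp.single i 1 = m
      · rw [if_pos h2, if_pos (h1.mp h2)]
        have : s i = m i + 1 := by rw [h1.mp h2]; simp
        rw [this]; push_cast; ring
      · rw [if_neg h2, if_neg (fun hh => h2 (h1.mpr hh))]
        simp

lemma degree_fin2 (d : Fin 2 →₀ ℕ) : Finsupp.degree d = d 0 + d 1 := by
  rw [Finsupp.degree_apply, Finset.sum_subset (Finset.subset_univ d.support)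
    (by intro x _ hx; simpa using Finsupp.notMem_support_iff.mp hx)]
  simp [Fin.sum_univ_two]

lemma isHomog_iff {n : ℕ} (q : MvPolynomial (Fin 2) ℝ) :
    q.IsHomogeneous n ↔ ∀ d, coeff d q ≠ 0 → Finsupp.degree d = n := by
  unfold MvPolynomial.IsHomogeneous MvPolynomial.IsWeightedHomogeneous
  rw [Finsupp.degree_eq_weight_one]
  rfl

lemma pderiv_isHomogeneous {n : ℕ} {q : MvPolynomial (Fin 2) ℝ}
    (hq : q.IsHomogeneous (n + 1)) (i : Fin 2) : (pderiv i q).IsHomogeneous n := by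
  rw [isHomog_iff] at hq ⊢
  intro d hd
  rw [coeff_pderiv'] at hd
  have h2 : coeff (d + Finsupp.single i 1) q ≠ 0 := fun h => hd (by rw [h, mul_zero])
  have := hq _ h2
  rw [degree_fin2] at this ⊢
  fin_cases i <;> simp at this <;> omega

lemma eq_zero_of_grad_zero {n : ℕ} {q : MvPolynomial (Fin 2) ℝ}
    (hq : q.IsHomogeneous (n + 1)) (h : ∀ i, pderiv i q = 0) : q = 0 := by
  rw [isHomog_iff] at hq
  ext d
  rw [coeff_zero]
  by_cases hd : d = 0
  · subst hd
    by_contra hc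
    have := hq _ hc
    simp [map_zero] at this
  · obtain ⟨i, hi⟩ : ∃ i, d i ≠ 0 := by
      by_contra hc
      push_neg at hc
      exact hd (Finsupp.ext fun j => hc j)
    have hle : Finsupp.single i 1 ≤ d := by rw [Finsupp.single_le_iff]; omega
    have hc := coeff_pderiv' i (d - Finsupp.single i 1) q
    rw [h i, coeff_zero, tsub_add_cancel_of_le hle] at hc
    have hne := Nat.cast_add_one_ne_zero (R := ℝ) ((d - Finsupp.single i 1 : Fin 2 →₀ ℕ) i)
    exact (mul_eq_zero.mp hc.symm).resolve_left hne

lemma grad2_inj_on_homog {n : ℕ} {q : MvPolynomial (Fin 2) ℝ}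
    (hq : q.IsHomogeneous (n + 1)) (h : grad2 q = 0) : q = 0 :=
  eq_zero_of_grad_zero hq fun i => congrFun h i

/-- The set of exponents of degree `n` in two variables is equivalent to `Fin (n+1)`. -/
noncomputable def degSetEquiv (n : ℕ) :
    ({d : Fin 2 →₀ ℕ | Finsupp.degree d = n} : Set _) ≃ Fin (n + 1) where
  toFun d := ⟨d.1 0, by
    have h1 := degree_fin2 d.1
    have h2 : Finsupp.degree d.1 = n := d.2
    omega⟩
  invFun j := ⟨Finsupp.single 0 (j : ℕ) + Finsupp.single 1 (n - j), by
    show Finsupp.degree _ = n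
    rw [degree_fin2]
    have := j.2
    simp [Finsupp.single_apply]
    omega⟩
  left_inv d := by
    have hd : Finsupp.degree d.1 = n := d.2
    rw [degree_fin2] at hd
    apply Subtype.ext
    ext j
    fin_cases j <;> simp [Finsupp.single_apply] <;> omega
  right_inv j := by
    ext
    simp [Finsupp.single_apply]

lemma homogSubmodule_eq (n : ℕ) :
    homogeneousSubmodule (Fin 2) ℝ n
      = MvPolynomial.restrictSupport ℝ {d : Fin 2 →₀ ℕ | Finsupp.degree d = n} :=
  homogeneousSubmodule_eq_finsupp_supported (Fin 2) ℝ n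

noncomputable instance fintypeDegSet (n : ℕ) :
    Fintype ({d : Fin 2 →₀ ℕ | Finsupp.degree d = n} : Set _) :=
  Fintype.ofEquiv _ (degSetEquiv n).symm

lemma finrank_homog (n : ℕ) :
    Module.finrank ℝ ↥(homogeneousSubmodule (Fin 2) ℝ n) = n + 1 := by
  rw [homogSubmodule_eq]
  rw [Module.finrank_eq_card_basis (MvPolynomial.basisRestrictSupport ℝ _)]
  rw [Fintype.card_congr (degSetEquiv n), Fintype.card_fin]

instance homogFD (n : ℕ) : FiniteDimensional ℝ ↥(homogeneousSubmodule (Fin 2) ℝ n) :=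
  Submodule.finiteDimensional_of_le (S₂ := restrictTotalDegree (Fin 2) ℝ n)
    (fun q hq => (mem_restrictTotalDegree _ _ _).mpr
      (IsHomogeneous.totalDegree_le ((mem_homogeneousSubmodule _ _).mp hq)))

noncomputable def vecInj (k : ℕ) :
    (Fin 2 → restrictTotalDegree (Fin 2) ℝ k) →ₗ[ℝ] (Fin 2 → MvPolynomial (Fin 2) ℝ) :=
  LinearMap.pi fun i => (Submodule.subtype _).comp (LinearMap.proj i)

instance vecPk2FD (k : ℕ) : FiniteDimensional ℝ ↥(vecPk2 k) := by
  apply Submodule.finiteDimensional_of_le (S₂ := LinearMap.range (vecInj k))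
  intro v hv
  exact ⟨fun i => ⟨v i, hv i (Set.mem_univ i)⟩, rfl⟩

lemma gradHom2_eq_range (k : ℕ) :
    gradHom2 k = LinearMap.range
      (grad2.comp (homogeneousSubmodule (Fin 2) ℝ (k + 2)).subtype) := by
  rw [LinearMap.range_comp, Submodule.range_subtype]; rfl

instance gradHom2FD (k : ℕ) : FiniteDimensional ℝ ↥(gradHom2 k) := by
  rw [gradHom2_eq_range]
  infer_instance

lemma finrank_gradHom2 (k : ℕ) : Module.finrank ℝ ↥(gradHom2 k) = k + 3 := by
  rw [gradHom2_eq_range]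
  rw [LinearMap.finrank_range_of_inj, finrank_homog]
  intro x y hxy
  have hx := x.2
  have hy := y.2
  rw [mem_homogeneousSubmodule] at hx hy
  have : ((x : MvPolynomial (Fin 2) ℝ) - y).IsHomogeneous (k + 1 + 1) := hx.sub hy
  have h0 : grad2 ((x : MvPolynomial (Fin 2) ℝ) - y) = 0 := by
    rw [map_sub]
    simpa [sub_eq_zero] using hxy
  have := grad2_inj_on_homog this h0
  exact Subtype.ext (sub_eq_zero.mp this)

/-- The local trace space `M^t(F) = [P_k(F)]² + ∇P̃_{k+2}(F)` is contained in
`[P_{k+1}(F)]²`, the sum is direct, and its dimension is `dim [P_k(F)]² + (k+3)`. -/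
theorem trace_space_dimension (k : ℕ) :
    (vecPk2 k ⊔ gradHom2 k ≤ vecPk2 (k + 1)) ∧
    (vecPk2 k ⊓ gradHom2 k = ⊥) ∧
    Module.finrank ℝ ↥(vecPk2 k ⊔ gradHom2 k) =
      Module.finrank ℝ ↥(vecPk2 k) + (k + 3) := by
  have hgradle : gradHom2 k ≤ vecPk2 (k + 1) := by
    rintro v ⟨q, hq, rfl⟩ i _
    replace hq : q.IsHomogeneous (k + 1 + 1) := hq
    show pderiv i q ∈ restrictTotalDegree (Fin 2) ℝ (k + 1)
    exact (mem_restrictTotalDegree _ _ _).mpr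
      (IsHomogeneous.totalDegree_le (pderiv_isHomogeneous hq i))
  have hinf : vecPk2 k ⊓ gradHom2 k = ⊥ := by
    rw [Submodule.eq_bot_iff]
    rintro v ⟨hv1, q, hq, rfl⟩
    replace hq : q.IsHomogeneous (k + 1 + 1) := hq
    have hz : ∀ i, pderiv i q = 0 := by
      intro i
      by_contra hne
      have h1 : (pderiv i q).IsHomogeneous (k + 1) := pderiv_isHomogeneous hq i
      have h2 := h1.totalDegree hne
      have h3 : (pderiv i q).totalDegree ≤ k :=
        (mem_restrictTotalDegree _ _ _).mp (hv1 i (Set.mem_univ i))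
      omega
    funext i
    exact hz i
  refine ⟨?_, hinf, ?_⟩
  · apply sup_le
    · intro v hv i _
      exact (mem_restrictTotalDegree _ _ _).mpr
        (((mem_restrictTotalDegree _ _ _).mp (hv i (Set.mem_univ i))).trans (Nat.le_succ k))
    · exact hgradle
  · have := Submodule.finrank_sup_add_finrank_inf_eq (vecPk2 k) (gradHom2 k)
    rw [hinf, finrank_bot, add_zero, finrank_gradHom2] at this
    exact this
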